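/- For θ ∈ [0, π/2] let |φ_z(θ)⟩ := cos(θ/2)|00⟩ + sin(θ/2)|11⟩, let Ω ∈ [0, 4/3], and let q_N ∈ [0,1]. Applying the composed channel D_{q_N}∘E³_Ω to each qubit (modeling port-based entanglement teleportation of the state through a resource affected by phase-flip noise) yields M[((D_{q_N}∘E³_Ω) ⊗ (D_{q_N}∘E³_Ω))(|φ_z(θ)⟩⟨φ_z(θ)|)] = max(0, q_N²·M_up − (1−q_N²)/2), where M_up := max(0, (1−3Ω/2)²·sin θ). -/
import Mathlib


open Matrix Kronecker
open scoped ComplexOrder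

noncomputable section

/-- 2×2 complex matrices (one qubit). -/
abbrev Mat2 := Matrix (Fin 2) (Fin 2) ℂ

/-- 4×4 complex matrices indexed by `(Fin 2) × (Fin 2)` (two qubits). -/
abbrev Mat4 := Matrix (Fin 2 × Fin 2) (Fin 2 × Fin 2) ℂ

/-- The identity and the three Pauli matrices: σ₀, σ₁, σ₂, σ₃. -/
def pauli : Fin 4 → Mat2 :=
  ![1, !![0, 1; 1, 0], !![0, -Complex.I; Complex.I, 0], !![1, 0; 0, -1]]

/-- Weights `(p₀, p₁, p₂, p₃)` with `p₀ := 4 - (p₁ + p₂ + p₃)`. -/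
def pw (p : Fin 3 → ℝ) : Fin 4 → ℝ := ![4 - (p 0 + p 1 + p 2), p 0, p 1, p 2]

/-- Single-qubit Pauli channel `E_p(ρ) = Σ_k (p_k/4) σ_k ρ σ_k`. -/
def pauliCh (p : Fin 3 → ℝ) (ρ : Mat2) : Mat2 :=
  ∑ k : Fin 4, ((pw p k / 4 : ℝ) : ℂ) • (pauli k * ρ * pauli k)

/-- `E_p ⊗ id` acting on two-qubit matrices. -/
def pauliFst (p : Fin 3 → ℝ) (ρ : Mat4) : Mat4 :=
  ∑ k : Fin 4, ((pw p k / 4 : ℝ) : ℂ) • ((pauli k ⊗ₖ 1) * ρ * (pauli k ⊗ₖ 1))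

/-- Local Pauli channel `E_p ⊗ E_p'` acting on two-qubit matrices. -/
def pauliLoc (p p' : Fin 3 → ℝ) (ρ : Mat4) : Mat4 :=
  ∑ k : Fin 4, ∑ l : Fin 4,
    ((pw p k * pw p' l / 16 : ℝ) : ℂ) •
      ((pauli k ⊗ₖ pauli l) * ρ * (pauli k ⊗ₖ pauli l))

/-- Partial transpose on the first qubit. -/
def ptranspose (ρ : Mat4) : Mat4 := fun x y => ρ (y.1, x.2) (x.1, y.2)

/-- Smallest (real) eigenvalue of a matrix. -/
def lambdaMin (A : Mat4) : ℝ :=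
  sInf {c : ℝ | ∃ v : Fin 2 × Fin 2 → ℂ, v ≠ 0 ∧ A *ᵥ v = (c : ℂ) • v}

/-- Measure of entanglement `M(ρ) = max (0, −2 λ_min(ρ^{T₁}))`. -/
def entMeasure (ρ : Mat4) : ℝ := max 0 (-2 * lambdaMin (ptranspose ρ))

/-- Two-qubit density matrix. -/
def IsDensity (ρ : Mat4) : Prop := ρ.PosSemidef ∧ ρ.trace = 1

/-- Depolarizing channel `D_q(ρ) = (1−q)·tr(ρ)·I/2 + q·ρ`. -/
def depol (q : ℝ) (ρ : Mat2) : Mat2 :=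
  (((1 - q : ℝ) : ℂ) * ρ.trace / 2) • (1 : Mat2) + ((q : ℝ) : ℂ) • ρ

/-- Basis vector `|ij⟩` of the two-qubit space. -/
def ket2 (i j : Fin 2) : (Fin 2 × Fin 2) → ℂ := fun x => if x = (i, j) then 1 else 0

/-- The four Bell states `|Ψ⁰⟩, |Ψ¹⟩, |Ψ²⟩, |Ψ³⟩`. -/
def bell : Fin 4 → ((Fin 2 × Fin 2) → ℂ) :=
  ![(((Real.sqrt 2 : ℝ) : ℂ))⁻¹ • (ket2 0 0 + ket2 1 1),
    (((Real.sqrt 2 : ℝ) : ℂ))⁻¹ • (ket2 0 1 + ket2 1 0),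
    (((Real.sqrt 2 : ℝ) : ℂ) * Complex.I)⁻¹ • (ket2 0 1 - ket2 1 0),
    (((Real.sqrt 2 : ℝ) : ℂ))⁻¹ • (ket2 0 0 - ket2 1 1)]

/-- Rank-one projector `|ψ⟩⟨ψ|`. -/
def proj (ψ : (Fin 2 × Fin 2) → ℂ) : Mat4 := fun a b => ψ a * (starRingEnd ℂ) (ψ b)

/-- Pauli-channel probability vector of the depolarizing channel `D_q`. -/
def depVec (q : ℝ) : Fin 3 → ℝ := fun _ => 1 - q

/-- Pauli-channel probability vector of the phase-flip channel `E³_Ω`. -/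
def phaseVec (Ω : ℝ) : Fin 3 → ℝ := ![0, 0, 3 * Ω]

/-- The Schmidt-form pure state `|φ_z(θ)⟩ = cos(θ/2)|00⟩ + sin(θ/2)|11⟩`. -/
def phiZ (θ : ℝ) : (Fin 2 × Fin 2) → ℂ :=
  ((Real.cos (θ / 2) : ℝ) : ℂ) • ket2 0 0 + ((Real.sin (θ / 2) : ℝ) : ℂ) • ket2 1 1


set_option maxHeartbeats 4000000

/-- X-form two-qubit matrix: diagonal `(d0, m, m, d1)`, inner off-diagonal
entries `t` at `(01,10)`,`(10,01)` and outer off-diagonal `w` at `(00,11)`,`(11,00)`. -/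
def Xmat (d0 d1 m t w : ℝ) : Mat4 := fun p q =>
  if p = ((0:Fin 2),(0:Fin 2)) ∧ q = ((0:Fin 2),(0:Fin 2)) then (d0:ℂ)
  else if p = ((1:Fin 2),(1:Fin 2)) ∧ q = ((1:Fin 2),(1:Fin 2)) then (d1:ℂ)
  else if p = q then (m:ℂ)
  else if (p = ((0:Fin 2),(1:Fin 2)) ∧ q = ((1:Fin 2),(0:Fin 2))) ∨
          (p = ((1:Fin 2),(0:Fin 2)) ∧ q = ((0:Fin 2),(1:Fin 2))) then (t:ℂ)
  else if (p = ((0:Fin 2),(0:Fin 2)) ∧ q = ((1:Fin 2),(1:Fin 2))) ∨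
          (p = ((1:Fin 2),(1:Fin 2)) ∧ q = ((0:Fin 2),(0:Fin 2))) then (w:ℂ)
  else 0

lemma proj_phiZ_eq (θ : ℝ) : proj (phiZ θ) =
    Xmat (Real.cos (θ/2)^2) (Real.sin (θ/2)^2) 0 0 (Real.cos (θ/2) * Real.sin (θ/2)) := by
  funext p q
  obtain ⟨i, j⟩ := p; obtain ⟨k, l⟩ := q
  fin_cases i <;> fin_cases j <;> fin_cases k <;> fin_cases l <;>
    simp [proj, phiZ, ket2, Xmat, Prod.ext_iff, Complex.conj_ofReal,
      -Complex.ofReal_cos, -Complex.ofReal_sin, ← Complex.ofReal_mul, ← Complex.ofReal_pow,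
      mul_comm, sq]

lemma phase_Xmat (Ω d0 d1 m t w : ℝ) :
    pauliLoc (phaseVec Ω) (phaseVec Ω) (Xmat d0 d1 m t w)
      = Xmat d0 d1 m ((1 - 3*Ω/2)^2 * t) ((1 - 3*Ω/2)^2 * w) := by
  funext p q
  obtain ⟨i, j⟩ := p; obtain ⟨k, l⟩ := q
  fin_cases i <;> fin_cases j <;> fin_cases k <;> fin_cases l <;>
    (simp [pauliLoc, pw, phaseVec, pauli, Matrix.mul_apply, Fintype.sum_prod_type,
      Fin.sum_univ_two, Fin.sum_univ_four, Matrix.kroneckerMap_apply, Xmat,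
      Matrix.smul_apply, Matrix.sum_apply, Prod.ext_iff, Complex.I_sq, Matrix.one_apply];
     (try push_cast); (try ring))

lemma dep_Xmat (q d0 d1 m t w : ℝ) :
    pauliLoc (depVec q) (depVec q) (Xmat d0 d1 m t w)
      = Xmat (((1+q)/2)^2*d0 + ((1-q)/2)^2*d1 + (1-q^2)/2*m)
             (((1+q)/2)^2*d1 + ((1-q)/2)^2*d0 + (1-q^2)/2*m)
             ((((1+q)/2)^2+((1-q)/2)^2)*m + (1-q^2)/4*(d0+d1))
             (q^2*t) (q^2*w) := by
  funext p q'
  obtain ⟨i, j⟩ := p; obtain ⟨k, l⟩ := q'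
  fin_cases i <;> fin_cases j <;> fin_cases k <;> fin_cases l <;>
    (simp [pauliLoc, pw, depVec, pauli, Matrix.mul_apply, Fintype.sum_prod_type,
      Fin.sum_univ_two, Fin.sum_univ_four, Matrix.kroneckerMap_apply, Xmat,
      Matrix.smul_apply, Matrix.sum_apply, Prod.ext_iff, Complex.I_sq, Matrix.one_apply];
     (try push_cast); (try ring);
     (try (ring_nf; simp only [Complex.I_sq]; push_cast; ring)))

lemma ptranspose_Xmat (d0 d1 m t w : ℝ) :
    ptranspose (Xmat d0 d1 m t w) = Xmat d0 d1 m w t := by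
  funext p q
  obtain ⟨i, j⟩ := p; obtain ⟨k, l⟩ := q
  fin_cases i <;> fin_cases j <;> fin_cases k <;> fin_cases l <;>
    simp [ptranspose, Xmat, Prod.ext_iff]

lemma eig_set (d0 d1 m t : ℝ) :
    {c : ℝ | ∃ v : Fin 2 × Fin 2 → ℂ, v ≠ 0 ∧ Xmat d0 d1 m t 0 *ᵥ v = (c:ℂ) • v}
      = {d0, d1, m + t, m - t} := by
  ext c
  simp only [Set.mem_setOf_eq, Set.mem_insert_iff, Set.mem_singleton_iff]
  constructor
  · rintro ⟨v, hv, hev⟩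
    have e00 := congrFun hev ((0:Fin 2),(0:Fin 2))
    have e01 := congrFun hev ((0:Fin 2),(1:Fin 2))
    have e10 := congrFun hev ((1:Fin 2),(0:Fin 2))
    have e11 := congrFun hev ((1:Fin 2),(1:Fin 2))
    simp only [Matrix.mulVec, dotProduct, Fintype.sum_prod_type, Fin.sum_univ_two,
      Xmat, Prod.mk.injEq, Pi.smul_apply, smul_eq_mul] at e00 e01 e10 e11
    norm_num at e00 e01 e10 e11
    obtain ⟨p, hp⟩ := Function.ne_iff.mp hv
    have key : ∀ x : ℝ, ∀ z : ℂ, z ≠ 0 → (x:ℂ) * z = (c:ℂ) * z → c = x := by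
      intro x z hz h
      have : (x:ℂ) = (c:ℂ) := mul_right_cancel₀ hz h
      exact_mod_cast this.symm
    have hsum : ((m + t : ℝ):ℂ) * (v (0,1) + v (1,0)) = (c:ℂ) * (v (0,1) + v (1,0)) := by
      push_cast; linear_combination e01 + e10
    have hdif : ((m - t : ℝ):ℂ) * (v (0,1) - v (1,0)) = (c:ℂ) * (v (0,1) - v (1,0)) := by
      push_cast; linear_combination e01 - e10
    have hmid : v (0,1) ≠ 0 ∨ v (1,0) ≠ 0 → c = m + t ∨ c = m - t := by
      intro hor
      by_cases hz : v (0,1) + v (1,0) = 0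
      · refine Or.inr (key _ _ ?_ hdif)
        intro h
        have h1 : v (0,1) = 0 := by linear_combination (hz + h) / 2
        have h2 : v (1,0) = 0 := by linear_combination (hz - h) / 2
        rcases hor with h' | h' <;> [exact h' h1; exact h' h2]
      · exact Or.inl (key _ _ hz hsum)
    obtain ⟨i, j⟩ := p
    fin_cases i <;> fin_cases j
    · rcases e00 with h | h
      · exact Or.inl h.symm
      · exact absurd h (by simpa using hp)
    · rcases hmid (Or.inl (by simpa using hp)) with h | h
      · exact Or.inr (Or.inr (Or.inl h))
      · exact Or.inr (Or.inr (Or.inr h))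
    · rcases hmid (Or.inr (by simpa using hp)) with h | h
      · exact Or.inr (Or.inr (Or.inl h))
      · exact Or.inr (Or.inr (Or.inr h))
    · rcases e11 with h | h
      · exact Or.inr (Or.inl h.symm)
      · exact absurd h (by simpa using hp)
  · rintro (rfl | rfl | rfl | rfl)
    · refine ⟨fun p => if p = (0,0) then 1 else 0, ?_, ?_⟩
      · intro h; simpa using congrFun h (0,0)
      · funext p; obtain ⟨i, j⟩ := p
        fin_cases i <;> fin_cases j <;>
          simp [Matrix.mulVec, dotProduct, Fintype.sum_prod_type, Fin.sum_univ_two,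
            Xmat, Prod.ext_iff]
    · refine ⟨fun p => if p = (1,1) then 1 else 0, ?_, ?_⟩
      · intro h; simpa using congrFun h (1,1)
      · funext p; obtain ⟨i, j⟩ := p
        fin_cases i <;> fin_cases j <;>
          simp [Matrix.mulVec, dotProduct, Fintype.sum_prod_type, Fin.sum_univ_two,
            Xmat, Prod.ext_iff]
    · refine ⟨fun p => if p = (0,1) ∨ p = (1,0) then 1 else 0, ?_, ?_⟩
      · intro h; simpa using congrFun h (0,1)
      · funext p; obtain ⟨i, j⟩ := p
        fin_cases i <;> fin_cases j <;>
          (simp [Matrix.mulVec, dotProduct, Fintype.sum_prod_type, Fin.sum_univ_two,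
            Xmat, Prod.ext_iff]; (try push_cast); (try ring))
    · refine ⟨fun p => if p = (0,1) then 1 else if p = (1,0) then -1 else 0, ?_, ?_⟩
      · intro h; simpa using congrFun h (0,1)
      · funext p; obtain ⟨i, j⟩ := p
        fin_cases i <;> fin_cases j <;>
          (simp [Matrix.mulVec, dotProduct, Fintype.sum_prod_type, Fin.sum_univ_two,
            Xmat, Prod.ext_iff]; (try push_cast); (try ring))

lemma lambdaMin_Xmat (d0 d1 m t : ℝ) :
    lambdaMin (Xmat d0 d1 m t 0) = min (min d0 d1) (min (m+t) (m-t)) := by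
  rw [lambdaMin, eig_set]
  have h1 : ({d0, d1, m + t, m - t} : Set ℝ) = insert d0 (insert d1 (insert (m+t) {m-t})) := rfl
  rw [h1, csInf_insert (Set.toFinite _).bddBelow (by simp),
    csInf_insert (Set.toFinite _).bddBelow (by simp),
    csInf_insert (Set.toFinite _).bddBelow (by simp), csInf_singleton]
  simp [min_assoc]

/-- PBET upper bound — `D_{q_N} ∘ E³_Ω` on each qubit of the
Schmidt-form state. -/
theorem entMeasure_PBET_upper (θ Ω qN : ℝ)
    (hθ : θ ∈ Set.Icc (0 : ℝ) (Real.pi / 2)) (hΩ : Ω ∈ Set.Icc (0 : ℝ) (4/3))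
    (hqN : qN ∈ Set.Icc (0 : ℝ) 1) :
    entMeasure (pauliLoc (depVec qN) (depVec qN)
        (pauliLoc (phaseVec Ω) (phaseVec Ω) (proj (phiZ θ))))
      = max 0 (qN ^ 2 * max 0 ((1 - 3 * Ω / 2) ^ 2 * Real.sin θ)
          - (1 - qN ^ 2) / 2) := by
  obtain ⟨hθ0, hθ1⟩ := hθ
  obtain ⟨hq0, hq1⟩ := hqN
  have hπ := Real.pi_pos
  set cc := Real.cos (θ/2) with hcc
  set ss := Real.sin (θ/2) with hss
  have hc : 0 ≤ cc := Real.cos_nonneg_of_mem_Icc ⟨by linarith, by linarith⟩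
  have hs : 0 ≤ ss := Real.sin_nonneg_of_nonneg_of_le_pi (by linarith) (by linarith)
  have hcs : ss^2 + cc^2 = 1 := Real.sin_sq_add_cos_sq _
  have hsin : Real.sin θ = 2 * ss * cc := by
    rw [show θ = 2 * (θ/2) by ring, Real.sin_two_mul]
  have hk : (0:ℝ) ≤ (1 - 3*Ω/2)^2 := sq_nonneg _
  rw [proj_phiZ_eq, phase_Xmat, dep_Xmat, entMeasure, ptranspose_Xmat]
  rw [show (qN^2*((1 - 3*Ω/2)^2*0) : ℝ) = 0 by ring, lambdaMin_Xmat]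
  set k := (1 - 3*Ω/2)^2
  set D0 := ((1+qN)/2)^2*cc^2 + ((1-qN)/2)^2*ss^2 + (1-qN^2)/2*0 with hD0
  set D1 := ((1+qN)/2)^2*ss^2 + ((1-qN)/2)^2*cc^2 + (1-qN^2)/2*0 with hD1
  set M := (((1+qN)/2)^2+((1-qN)/2)^2)*0 + (1-qN^2)/4*(cc^2+ss^2) with hM
  set W := qN^2*(k*(cc*ss)) with hW
  have hD0n : 0 ≤ D0 := by
    rw [hD0]; nlinarith [sq_nonneg ((1+qN)*cc), sq_nonneg ((1-qN)*ss)]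
  have hD1n : 0 ≤ D1 := by
    rw [hD1]; nlinarith [sq_nonneg ((1+qN)*ss), sq_nonneg ((1-qN)*cc)]
  have hWn : 0 ≤ W := by
    rw [hW]; exact mul_nonneg (sq_nonneg _) (mul_nonneg hk (mul_nonneg hc hs))
  have hM1 : M = (1 - qN^2)/4 := by
    rw [hM]; linear_combination (1 - qN^2)/4 * hcs
  have hMn : 0 ≤ M := by rw [hM1]; nlinarith
  have hrhs : qN ^ 2 * max 0 (k * Real.sin θ) - (1 - qN ^ 2) / 2 = -2 * (M - W) := by
    rw [max_eq_right (by rw [hsin]; exact mul_nonneg hk (by nlinarith [mul_nonneg hs hc]))]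
    rw [hsin, hM1, hW]; ring
  rw [hrhs]
  rcases le_total 0 (M - W) with h | h
  · have h1 : 0 ≤ min (min D0 D1) (min (M+W) (M-W)) :=
      le_min (le_min hD0n hD1n) (le_min (by linarith) h)
    rw [max_eq_left (by linarith), max_eq_left (by linarith)]
  · rw [min_eq_right (by linarith : M - W ≤ M + W),
      min_eq_right (le_min (by linarith) (by linarith) : M - W ≤ min D0 D1)]
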